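/- Fix parameters α > 0, γ > 0 with α + γ < 1, ξ > 1, ψ ∈ (0,1), λ_x > 0, λ_θ > 0, σ₁ ≥ 0, σ₂ ≥ 0, and set D := 1 + (1−α−γ)(ξ−1), η^Q := ξ/D. For z_t > 0 let λ_t(z_t) denote the unique solution in [0,∞) of −λ = (((ξ−1)(γ−ψ(1−α))−ψ)/(γD))·(λ/λ_x)^ψ − ((1+(ξ−1)(1−α))/D)·z_t − λ_θ, and set η^Q_θ(z_t) := −γ·z_t + (1−ψ)·(λ_t(z_t)/λ_x)^ψ. Then the dispersion of log revenue productivity Var(log TFPR) = [(λ_t(z_t)/λ_x)^ψ − η^Q·η^Q_θ(z_t)/ξ]²·λ_θ^(−2) + (η^Q/ξ)²·(γ²σ₁² + α²σ₂²) is strictly increasing in z_t: if 0 < z₁ < z₂ then its value at z₁ is strictly smaller than its value at z₂. -/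

import Mathlib

set_option maxHeartbeats 1600000 in
/-- The dispersion of log revenue productivity
`[(λ_t/λx)^ψ - η^Q η^Q_θ/ξ]² λθ⁻² + (η^Q/ξ)² (γ²σ₁² + α²σ₂²)` is strictly
increasing in the market efficiency wedge `z_t`, where `λ_t(z_t)` is the
unique nonnegative solution of the equilibrium job-distribution equation,
`D = 1+(1-α-γ)(ξ-1)`, `η^Q = ξ/D`, `η^Q_θ(z) = -γ z + (1-ψ)(λ_t(z)/λx)^ψ`. -/
theorem stmt_8 (α γ ξ ψ lamx lamθ σ₁ σ₂ : ℝ)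
    (hα : 0 < α) (hγ : 0 < γ) (hαγ : α + γ < 1) (hξ : 1 < ξ)
    (hψ0 : 0 < ψ) (hψ1 : ψ < 1) (hlamx : 0 < lamx) (hlamθ : 0 < lamθ)
    (hσ₁ : 0 ≤ σ₁) (hσ₂ : 0 ≤ σ₂)
    (z₁ z₂ l₁ l₂ : ℝ) (hz₁ : 0 < z₁) (hz₁₂ : z₁ < z₂)
    (hl₁ : 0 ≤ l₁) (hl₂ : 0 ≤ l₂)
    (heq₁ : -l₁ = (((ξ - 1) * (γ - ψ * (1 - α)) - ψ) / (γ * (1 + (1 - α - γ) * (ξ - 1))))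
          * (l₁ / lamx) ^ ψ
        - ((1 + (ξ - 1) * (1 - α)) / (1 + (1 - α - γ) * (ξ - 1))) * z₁ - lamθ)
    (heq₂ : -l₂ = (((ξ - 1) * (γ - ψ * (1 - α)) - ψ) / (γ * (1 + (1 - α - γ) * (ξ - 1))))
          * (l₂ / lamx) ^ ψ
        - ((1 + (ξ - 1) * (1 - α)) / (1 + (1 - α - γ) * (ξ - 1))) * z₂ - lamθ) :
    ((l₁ / lamx) ^ ψ
          - (ξ / (1 + (1 - α - γ) * (ξ - 1)))
            * (-γ * z₁ + (1 - ψ) * (l₁ / lamx) ^ ψ) / ξ) ^ 2 * lamθ ^ (-(2 : ℝ))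
        + ((ξ / (1 + (1 - α - γ) * (ξ - 1))) / ξ) ^ 2
          * (γ ^ 2 * σ₁ ^ 2 + α ^ 2 * σ₂ ^ 2)
      < ((l₂ / lamx) ^ ψ
          - (ξ / (1 + (1 - α - γ) * (ξ - 1)))
            * (-γ * z₂ + (1 - ψ) * (l₂ / lamx) ^ ψ) / ξ) ^ 2 * lamθ ^ (-(2 : ℝ))
        + ((ξ / (1 + (1 - α - γ) * (ξ - 1))) / ξ) ^ 2
          * (γ ^ 2 * σ₁ ^ 2 + α ^ 2 * σ₂ ^ 2) := by
  have hξ0 : (0:ℝ) < ξ := by linarith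
  set D := 1 + (1 - α - γ) * (ξ - 1) with hDdef
  have hD1 : 1 < D := by nlinarith
  have hD0 : (0:ℝ) < D := by linarith
  have hN0 : (0:ℝ) < 1 + (ξ - 1) * (1 - α) := by nlinarith
  set A := ((ξ - 1) * (γ - ψ * (1 - α)) - ψ) / (γ * D) with hAdef
  set B := (1 + (ξ - 1) * (1 - α)) / D with hBdef
  have hB0 : 0 < B := div_pos hN0 hD0
  set x₁ := (l₁ / lamx) ^ ψ with hx1def
  set x₂ := (l₂ / lamx) ^ ψ with hx2def
  clear_value D A B x₁ x₂
  have hx₁0 : 0 ≤ x₁ := by rw [hx1def]; exact Real.rpow_nonneg (div_nonneg hl₁ hlamx.le) ψ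
  have hx₂0 : 0 ≤ x₂ := by rw [hx2def]; exact Real.rpow_nonneg (div_nonneg hl₂ hlamx.le) ψ
  have he₁ : l₁ + A * x₁ = B * z₁ + lamθ := by linarith [heq₁]
  have he₂ : l₂ + A * x₂ = B * z₂ + lamθ := by linarith [heq₂]
  -- Step 1: l₁ < l₂
  have hll : l₁ < l₂ := by
    by_contra hcon
    push_neg at hcon
    have hxle : x₂ ≤ x₁ := by
      rw [hx1def, hx2def]
      exact Real.rpow_le_rpow (div_nonneg hl₂ hlamx.le)
        ((div_le_div_iff_of_pos_right hlamx).mpr hcon) hψ0.le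
    have hBz : B * z₁ < B * z₂ := mul_lt_mul_of_pos_left hz₁₂ hB0
    rcases le_or_gt 0 A with hA0 | hA0
    · nlinarith [mul_le_mul_of_nonneg_left hxle hA0]
    · rcases eq_or_lt_of_le hl₁ with h10 | h10
      · have hl1z : l₁ = 0 := h10.symm
        have hl2z : l₂ = 0 := le_antisymm (hl1z ▸ hcon) hl₂
        have hx2z : x₂ = 0 := by
          rw [hx2def, hl2z, zero_div, Real.zero_rpow hψ0.ne']
        rw [hl2z, hx2z] at he₂
        nlinarith [mul_pos hB0 (hz₁.trans hz₁₂)]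
      · set t := l₂ / l₁ with htdef
        have ht0 : 0 ≤ t := div_nonneg hl₂ h10.le
        have ht1 : t ≤ 1 := (div_le_one h10).mpr hcon
        have hl2t : l₂ = t * l₁ := by rw [htdef]; exact (div_mul_cancel₀ l₂ h10.ne').symm
        have hx2t : x₂ = t ^ ψ * x₁ := by
          rw [hx2def, hx1def, hl2t, mul_div_assoc,
            Real.mul_rpow ht0 (div_nonneg h10.le hlamx.le)]
        have htψ : t ≤ t ^ ψ := by
          rcases eq_or_lt_of_le ht0 with h0 | h0
          · rw [← h0, Real.zero_rpow hψ0.ne']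
          · calc t = t ^ (1:ℝ) := (Real.rpow_one t).symm
              _ ≤ t ^ ψ := Real.rpow_le_rpow_of_exponent_ge h0 ht1 hψ1.le
        have key : l₂ + A * x₂ ≤ t * (l₁ + A * x₁) := by
          rw [hx2t, hl2t]
          have h2 : A * (t ^ ψ * x₁) ≤ A * (t * x₁) :=
            mul_le_mul_of_nonpos_left (mul_le_mul_of_nonneg_right htψ hx₁0) hA0.le
          have h3 : t * (l₁ + A * x₁) = t * l₁ + A * (t * x₁) := by ring
          linarith [h2, h3.ge]
        have hpos : 0 < B * z₁ + lamθ := by positivity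
        have h4 : t * (B * z₁ + lamθ) ≤ 1 * (B * z₁ + lamθ) :=
          mul_le_mul_of_nonneg_right ht1 hpos.le
        rw [he₁] at key
        linarith
  have hxlt : x₁ ≤ x₂ := by
    rw [hx1def, hx2def]
    exact Real.rpow_le_rpow (div_nonneg hl₁ hlamx.le)
      ((div_le_div_iff_of_pos_right hlamx).mpr hll.le) hψ0.le
  -- explicit solutions for z
  have hγN : γ * (1 + (ξ - 1) * (1 - α)) ≠ 0 := by positivity
  have hzz : ∀ l x z : ℝ, (-l = A * x - B * z - lamθ) →
      z = (γ * D * l + ((ξ - 1) * (γ - ψ * (1 - α)) - ψ) * x - γ * D * lamθ)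
        / (γ * (1 + (ξ - 1) * (1 - α))) := by
    intro l x z h
    rw [hAdef, hBdef] at h
    field_simp [hγ.ne', hD0.ne'] at h
    rw [eq_div_iff hγN]
    apply mul_left_cancel₀ hD0.ne'
    ring_nf at h ⊢
    linear_combination D * h
  have hz1 := hzz l₁ x₁ z₁ heq₁
  have hz2 := hzz l₂ x₂ z₂ heq₂
  have hDe0 : (1 + (1 - α - γ) * (ξ - 1)) ≠ 0 := by rw [← hDdef]; exact hD0.ne'
  set T₁ := x₁ - ξ / D * (-γ * z₁ + (1 - ψ) * x₁) / ξ with hT1def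
  set T₂ := x₂ - ξ / D * (-γ * z₂ + (1 - ψ) * x₂) / ξ with hT2def
  clear_value T₁ T₂
  have hT1pos : 0 < T₁ := by
    have e : T₁ = ((D - 1 + ψ) * x₁ + γ * z₁) / D := by
      rw [hT1def]; field_simp [hD0.ne', hξ0.ne']; ring
    rw [e]
    apply div_pos _ hD0
    have h6 : 0 ≤ (D - 1 + ψ) * x₁ := mul_nonneg (by linarith) hx₁0
    linarith [mul_pos hγ hz₁]
  have hT1eq : T₁ = ((ξ - 1) * (1 - α) * x₁ + γ * l₁ - γ * lamθ)
      / (1 + (ξ - 1) * (1 - α)) := by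
    rw [hT1def, hz1, hDdef]; field_simp [hγ.ne', hξ0.ne', hDe0, hN0.ne', (by linarith : (0:ℝ) < 1 + (1 - α) * (ξ - 1)).ne']; ring
  have hT2eq : T₂ = ((ξ - 1) * (1 - α) * x₂ + γ * l₂ - γ * lamθ)
      / (1 + (ξ - 1) * (1 - α)) := by
    rw [hT2def, hz2, hDdef]; field_simp [hγ.ne', hξ0.ne', hDe0, hN0.ne', (by linarith : (0:ℝ) < 1 + (1 - α) * (ξ - 1)).ne']; ring
  have hTlt : T₁ < T₂ := by
    rw [hT1eq, hT2eq]
    have hnum : (ξ - 1) * (1 - α) * x₁ + γ * l₁ - γ * lamθ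
        < (ξ - 1) * (1 - α) * x₂ + γ * l₂ - γ * lamθ := by
      have h5 : (ξ - 1) * (1 - α) * x₁ ≤ (ξ - 1) * (1 - α) * x₂ :=
        mul_le_mul_of_nonneg_left hxlt (by nlinarith : (0:ℝ) ≤ (ξ - 1) * (1 - α))
      nlinarith [mul_lt_mul_of_pos_left hll hγ]
    exact div_lt_div_of_pos_right hnum hN0
  have hsq : T₁ ^ 2 < T₂ ^ 2 := by nlinarith
  have hm : 0 < lamθ ^ (-(2:ℝ)) := Real.rpow_pos_of_pos hlamθ _
  nlinarith [mul_lt_mul_of_pos_right hsq hm]
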